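/- For any nonempty finite words u, v, the minimum string attractor size satisfies γ*(uv) ≤ γ*(u) + γ*(v) + 1. -/

import Mathlib

open scoped Classical

/-- `u` occurs in `w` starting at (0-based) position `i`. -/
def occursAt {α : Type*} (w u : List α) (i : ℕ) : Prop := (w.drop i).take u.length = u

/-- `u` is a factor of the finite word `w`. -/
def IsFactorOf {α : Type*} (w u : List α) : Prop := ∃ i, occursAt w u i

/-- `Γ` is a string attractor of the finite word `w` (positions are 0-based). -/
def IsAttractor {α : Type*} (w : List α) (Γ : Finset ℕ) : Prop :=
  (∀ k ∈ Γ, k < w.length) ∧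
  ∀ u : List α, u ≠ [] → IsFactorOf w u →
    ∃ i, occursAt w u i ∧ ∃ k ∈ Γ, i ≤ k ∧ k < i + u.length

/-- `γ*(w)`: minimum size of a string attractor of `w`. -/
noncomputable def gammaStar {α : Type*} (w : List α) : ℕ :=
  sInf {n | ∃ Γ : Finset ℕ, IsAttractor w Γ ∧ Γ.card = n}

/-- `span(w)`: minimum of (rightmost − leftmost position) over string attractors of `w`. -/
noncomputable def spanW {α : Type*} (w : List α) : ℕ :=
  sInf {d | ∃ Γ : Finset ℕ, IsAttractor w Γ ∧ sSup (Γ : Set ℕ) - sInf (Γ : Set ℕ) = d}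

/-- `lm(w)`: minimum rightmost position over string attractors of `w`. -/
noncomputable def lmW {α : Type*} (w : List α) : ℕ :=
  sInf {m | ∃ Γ : Finset ℕ, IsAttractor w Γ ∧ sSup (Γ : Set ℕ) = m}

/-- prefix of length `n` of the infinite word `x`. -/
def pref {α : Type*} (x : ℕ → α) (n : ℕ) : List α := (List.range n).map x

/-- the factor of length `m` of `x` starting at position `i`. -/
def factorAt {α : Type*} (x : ℕ → α) (i m : ℕ) : List α := (List.range m).map (fun t => x (i + t))

/-- `u` is a factor of the infinite word `x`. -/
def IsFactorInf {α : Type*} (x : ℕ → α) (u : List α) : Prop := ∃ i, u = factorAt x i u.length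

/-- factor complexity `p_x(n)`. -/
noncomputable def complexity {α : Type*} (x : ℕ → α) (n : ℕ) : ℕ :=
  {u : List α | u.length = n ∧ IsFactorInf x u}.ncard

/-- appearance function `A_x(n)`: least `m` such that the prefix of length `m`
contains all factors of `x` of length `n`. -/
noncomputable def appearance {α : Type*} (x : ℕ → α) (n : ℕ) : ℕ :=
  sInf {m | ∀ u : List α, u.length = n → IsFactorInf x u → IsFactorOf (pref x m) u}

/-- `x` is ultimately periodic. -/
def UltPeriodic {α : Type*} (x : ℕ → α) : Prop :=
  ∃ p N : ℕ, 0 < p ∧ ∀ i, N ≤ i → x (i + p) = x i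

/-- `x` is recurrent: every factor occurs infinitely often. -/
def Recurrent {α : Type*} (x : ℕ → α) : Prop :=
  ∀ u : List α, IsFactorInf x u → ∀ N : ℕ, ∃ i, N ≤ i ∧ u = factorAt x i u.length

/-- `u ^ k`: the `k`-th power of a finite word. -/
def listPow {α : Type*} (u : List α) : ℕ → List α
  | 0 => []
  | k + 1 => u ++ listPow u k

/-- `x` is ω-power free. -/
def OmegaPowerFree {α : Type*} (x : ℕ → α) : Prop :=
  ∀ u : List α, u ≠ [] → IsFactorInf x u → ∃ k : ℕ, ¬ IsFactorInf x (listPow u k)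


lemma full_attractor {α : Type*} (w : List α) :
    IsAttractor w (Finset.range w.length) := by
  constructor
  · intro k hk; simpa using hk
  · intro f hf ⟨i, hi⟩
    refine ⟨i, hi, i, ?_, le_refl i, ?_⟩
    · simp only [Finset.mem_range]
      by_contra h
      push_neg at h
      unfold occursAt at hi
      rw [List.drop_eq_nil_of_le h] at hi
      simp at hi
      exact hf hi
    · have : 0 < f.length := List.length_pos_iff.2 hf
      omega

lemma exists_min_attractor {α : Type*} (w : List α) :
    ∃ Γ : Finset ℕ, IsAttractor w Γ ∧ Γ.card = gammaStar w := by
  have hne : {n | ∃ Γ : Finset ℕ, IsAttractor w Γ ∧ Γ.card = n}.Nonempty :=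
    ⟨_, _, full_attractor w, rfl⟩
  exact Nat.sInf_mem hne

lemma occursAt_append_left {α : Type*} {u : List α} (v : List α) {f : List α} {i : ℕ}
    (h : occursAt u f i) (hle : i + f.length ≤ u.length) : occursAt (u ++ v) f i := by
  unfold occursAt at *
  rw [List.drop_append_of_le_length (by omega), List.take_append_of_le_length (by
    simp [List.length_drop]; omega)]
  exact h

lemma occursAt_append_right {α : Type*} (u : List α) {v f : List α} {j : ℕ}
    (h : occursAt v f j) : occursAt (u ++ v) f (u.length + j) := by
  unfold occursAt at *
  rw [List.drop_length_add_append]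
  exact h

/-- `γ*(uv) ≤ γ*(u) + γ*(v) + 1`. -/
theorem stmt3 {α : Type*} (u v : List α) (hu : u ≠ []) (hv : v ≠ []) :
    gammaStar (u ++ v) ≤ gammaStar u + gammaStar v + 1 := by
  obtain ⟨Γu, hΓu, hcu⟩ := exists_min_attractor u
  obtain ⟨Γv, hΓv, hcv⟩ := exists_min_attractor v
  set Γ : Finset ℕ := Γu ∪ Γv.image (· + u.length) ∪ {u.length - 1} with hΓdef
  have hupos : 0 < u.length := List.length_pos_iff.2 hu
  have hAtt : IsAttractor (u ++ v) Γ := by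
    constructor
    · intro k hk
      simp only [hΓdef, Finset.mem_union, Finset.mem_image, Finset.mem_singleton] at hk
      rcases hk with (hk | ⟨j, hj, rfl⟩) | rfl
      · have := hΓu.1 k hk; simp; omega
      · have := hΓv.1 j hj; simp; omega
      · have hvpos : 0 < v.length := List.length_pos_iff.2 hv
        simp; omega
    · intro f hf ⟨i, hi⟩
      have hfpos : 0 < f.length := List.length_pos_iff.2 hf
      by_cases h1 : i + f.length ≤ u.length
      · -- factor of u
        have hocc : occursAt u f i := by
          unfold occursAt at hi ⊢
          rw [List.drop_append_of_le_length (by omega), List.take_append_of_le_length (by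
            simp [List.length_drop]; omega)] at hi
          exact hi
        obtain ⟨i', hi', k, hk, hik, hik'⟩ := hΓu.2 f hf ⟨i, hocc⟩
        have hk' : k < u.length := hΓu.1 k hk
        refine ⟨i', occursAt_append_left v hi' ?_, k, ?_, hik, hik'⟩
        · -- i' + f.length ≤ u.length : occursAt u f i' with f nonempty means take gives length f
          unfold occursAt at hi'
          have := congrArg List.length hi'
          simp [List.length_take, List.length_drop] at this
          omega
        · simp [hΓdef, Finset.mem_union]; tauto
      · by_cases h2 : u.length ≤ i
        · -- factor of v
          have hocc : occursAt v f (i - u.length) := by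
            unfold occursAt at hi ⊢
            have hieq : i = u.length + (i - u.length) := by omega
            rw [hieq, List.drop_length_add_append] at hi
            exact hi
          obtain ⟨j, hj, k, hk, hjk, hjk'⟩ := hΓv.2 f hf ⟨_, hocc⟩
          refine ⟨u.length + j, occursAt_append_right u hj, u.length + k, ?_, by omega, by omega⟩
          simp only [hΓdef, Finset.mem_union, Finset.mem_image]
          exact Or.inl (Or.inr ⟨k, hk, by omega⟩)
        · -- crossing
          refine ⟨i, hi, u.length - 1, ?_, by omega, by omega⟩
          simp [hΓdef, Finset.mem_union]
  have hcard : Γ.card ≤ gammaStar u + gammaStar v + 1 := by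
    calc Γ.card ≤ (Γu ∪ Γv.image (· + u.length)).card + ({u.length - 1} : Finset ℕ).card :=
          Finset.card_union_le _ _
      _ ≤ Γu.card + (Γv.image (· + u.length)).card + 1 := by
          have := Finset.card_union_le Γu (Γv.image (· + u.length)); simp; omega
      _ ≤ Γu.card + Γv.card + 1 := by
          have := Finset.card_image_le (s := Γv) (f := (· + u.length)); omega
      _ = gammaStar u + gammaStar v + 1 := by rw [hcu, hcv]
  exact le_trans (Nat.sInf_le ⟨Γ, hAtt, rfl⟩) hcard
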